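/- Let H = (V, E) be a simple t-uniform hypergraph and let U ⊆ V. Then there exists a simple t-uniform hypergraph H' on V such that: (i) every vertex v ∈ V \ U has the same degree in H' as in H; (ii) the sum of degrees over U is the same in H and H'; and (iii) the degrees of vertices of U in H' are almost regular, i.e., all lie in {k, k+1} for some integer k. -/

import Mathlib

/-- Degree of a vertex in a hypergraph given as a finite set of edges. -/
def hdeg {V : Type*} [DecidableEq V] (H : Finset (Finset V)) (v : V) : ℕ :=
  (H.filter (fun e => v ∈ e)).card

lemma hdeg_key {V : Type*} [DecidableEq V] (H : Finset (Finset V)) (e e' : Finset V)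
    (he : e ∈ H) (he' : e' ∉ H) (v : V) :
    hdeg (insert e' (H.erase e)) v + (if v ∈ e then 1 else 0)
      = hdeg H v + (if v ∈ e' then 1 else 0) := by
  unfold hdeg
  rw [Finset.filter_insert, Finset.filter_erase]
  by_cases h' : v ∈ e' <;> by_cases h : v ∈ e <;> simp only [h, h', if_true, if_false]
  · have hmem : e ∈ H.filter (fun e => v ∈ e) := Finset.mem_filter.mpr ⟨he, h⟩
    have hne : e' ∉ (H.filter (fun e => v ∈ e)).erase e := fun hc =>
      he' (Finset.mem_filter.mp (Finset.mem_of_mem_erase hc)).1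
    rw [Finset.card_insert_of_notMem hne, Finset.card_erase_of_mem hmem]
    have : 1 ≤ (H.filter (fun e => v ∈ e)).card := Finset.card_pos.mpr ⟨e, hmem⟩
    omega
  · have hne : e ∉ H.filter (fun e => v ∈ e) := fun hc => h (Finset.mem_filter.mp hc).2
    rw [Finset.erase_eq_of_notMem hne]
    have hne' : e' ∉ H.filter (fun e => v ∈ e) := fun hc =>
      he' (Finset.mem_filter.mp hc).1
    rw [Finset.card_insert_of_notMem hne']
  · have hmem : e ∈ H.filter (fun e => v ∈ e) := Finset.mem_filter.mpr ⟨he, h⟩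
    rw [Finset.card_erase_of_mem hmem]
    have : 1 ≤ (H.filter (fun e => v ∈ e)).card := Finset.card_pos.mpr ⟨e, hmem⟩
    omega
  · have hne : e ∉ H.filter (fun e => v ∈ e) := fun hc => h (Finset.mem_filter.mp hc).2
    rw [Finset.erase_eq_of_notMem hne]

lemma switch_exists {V : Type*} [DecidableEq V] (H : Finset (Finset V)) (u w : V)
    (hne : u ≠ w) (huw : hdeg H w + 2 ≤ hdeg H u) :
    ∃ e ∈ H, u ∈ e ∧ w ∉ e ∧ insert w (e.erase u) ∉ H := by
  by_contra hcon
  push_neg at hcon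
  set A := (H.filter (fun e => u ∈ e)).filter (fun e => w ∉ e) with hA
  set B := (H.filter (fun e => w ∈ e)).filter (fun e => u ∉ e) with hB
  have hAcard : A.card + ((H.filter (fun e => u ∈ e)).filter (fun e => ¬ w ∉ e)).card
      = hdeg H u := Finset.card_filter_add_card_filter_not _
  have hBcard : B.card + ((H.filter (fun e => w ∈ e)).filter (fun e => ¬ u ∉ e)).card
      = hdeg H w := Finset.card_filter_add_card_filter_not _
  have hCC : ((H.filter (fun e => u ∈ e)).filter (fun e => ¬ w ∉ e)).card
      = ((H.filter (fun e => w ∈ e)).filter (fun e => ¬ u ∉ e)).card := by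
    congr 1
    ext e
    simp only [Finset.mem_filter, not_not]
    tauto
  -- injection from A to B
  have hAB : A.card ≤ B.card := by
    apply Finset.card_le_card_of_injOn (fun e => insert w (e.erase u))
    · intro e heA
      simp only [hA, Finset.mem_coe, Finset.mem_filter] at heA
      obtain ⟨⟨heH, hue⟩, hwe⟩ := heA
      have hmem : insert w (e.erase u) ∈ H := hcon e heH hue hwe
      simp only [hB, Finset.mem_coe, Finset.mem_filter]
      refine ⟨⟨hmem, Finset.mem_insert_self _ _⟩, ?_⟩
      simp [Finset.mem_insert, Finset.mem_erase, hne]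
    · intro e1 h1 e2 h2 heq
      simp only [hA, Finset.coe_filter, Finset.mem_filter, Set.mem_setOf_eq] at h1 h2
      have hw1 : w ∉ e1.erase u := fun hc => h1.2 (Finset.mem_of_mem_erase hc)
      have hw2 : w ∉ e2.erase u := fun hc => h2.2 (Finset.mem_of_mem_erase hc)
      have : e1.erase u = e2.erase u := by
        have := congrArg (fun s => Finset.erase s w) heq
        simpa [Finset.erase_insert hw1, Finset.erase_insert hw2] using this
      calc e1 = insert u (e1.erase u) := (Finset.insert_erase h1.1.2).symm
        _ = insert u (e2.erase u) := by rw [this]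
        _ = e2 := Finset.insert_erase h2.1.2
  omega

/-- The switching step plus strong induction on `∑ v ∈ U, (hdeg H' v)^2`. -/
lemma aux_main (n t : ℕ) (U : Finset (Fin n)) :
    ∀ N (H' : Finset (Finset (Fin n))), (∀ e ∈ H', e.card = t) →
      ∑ v ∈ U, (hdeg H' v)^2 ≤ N →
      ∃ H'' : Finset (Finset (Fin n)),
        (∀ e ∈ H'', e.card = t) ∧
        (∀ v ∉ U, hdeg H'' v = hdeg H' v) ∧
        (∑ v ∈ U, hdeg H'' v = ∑ v ∈ U, hdeg H' v) ∧
        (∃ k : ℕ, ∀ v ∈ U, hdeg H'' v = k ∨ hdeg H'' v = k + 1) := by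
  intro N
  induction N with
  | zero =>
    intro H' ht hsum
    refine ⟨H', ht, fun v _ => rfl, rfl, 0, fun v hv => ?_⟩
    have : (hdeg H' v)^2 = 0 := by
      have h1 : (hdeg H' v)^2 ≤ ∑ x ∈ U, (hdeg H' x)^2 :=
        Finset.single_le_sum (f := fun x => (hdeg H' x)^2) (fun i _ => Nat.zero_le _) hv
      omega
    left
    nlinarith
  | succ N ih =>
    intro H' ht hsum
    by_cases hreg : ∃ k : ℕ, ∀ v ∈ U, hdeg H' v = k ∨ hdeg H' v = k + 1
    · exact ⟨H', ht, fun v _ => rfl, rfl, hreg⟩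
    -- find u, w with deg u ≥ deg w + 2
    have hUne : U.Nonempty := by
      rcases U.eq_empty_or_nonempty with h | h
      · exact absurd ⟨0, fun v hv => by simp [h] at hv⟩ hreg
      · exact h
    obtain ⟨w, hw, hwmin⟩ := U.exists_min_image (fun v => hdeg H' v) hUne
    push_neg at hreg
    obtain ⟨u, hu, hu1, hu2⟩ := hreg (hdeg H' w)
    have hwu : hdeg H' w ≤ hdeg H' u := hwmin u hu
    have hgap : hdeg H' w + 2 ≤ hdeg H' u := by omega
    have hne : u ≠ w := by intro h; rw [h] at hgap; omega
    obtain ⟨e, heH, hue, hwe, he'H⟩ := switch_exists H' u w hne hgap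
    set e' : Finset (Fin n) := insert w (e.erase u) with he'
    set H2 : Finset (Finset (Fin n)) := insert e' (H'.erase e) with hH2
    have hkey : ∀ v, hdeg H2 v + (if v ∈ e then 1 else 0)
        = hdeg H' v + (if v ∈ e' then 1 else 0) := hdeg_key H' e e' heH he'H
    have hmemE : ∀ v, v ≠ u → v ≠ w → (v ∈ e' ↔ v ∈ e) := by
      intro v hvu hvw
      simp only [he', Finset.mem_insert, Finset.mem_erase]
      constructor
      · rintro (h | h)
        · exact absurd h hvw
        · exact h.2
      · intro h; exact Or.inr ⟨hvu, h⟩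
    have hsame : ∀ v, v ≠ u → v ≠ w → hdeg H2 v = hdeg H' v := by
      intro v hvu hvw
      have := hkey v
      have hiff := hmemE v hvu hvw
      by_cases hv : v ∈ e <;> simp [hv, hiff] at this <;> omega
    have hdu : hdeg H2 u + 1 = hdeg H' u := by
      have := hkey u
      have hu' : u ∉ e' := by
        simp [he', Finset.mem_insert, Finset.mem_erase, hne]
      simpa [hue, hu'] using this
    have hdw : hdeg H2 w = hdeg H' w + 1 := by
      have := hkey w
      simpa [hwe, he', Finset.mem_insert_self] using this
    -- uniformity of H2
    have ht2 : ∀ f ∈ H2, f.card = t := by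
      intro f hf
      rcases Finset.mem_insert.mp hf with h | h
      · subst h
        have hwne : w ∉ e.erase u := fun hc => hwe (Finset.mem_of_mem_erase hc)
        rw [he', Finset.card_insert_of_notMem hwne, Finset.card_erase_of_mem hue]
        have h1 : 1 ≤ e.card := Finset.card_pos.mpr ⟨u, hue⟩
        have := ht e heH
        omega
      · exact ht f (Finset.mem_of_mem_erase h)
    -- splitting sums over U
    have hwU' : w ∈ U.erase u := Finset.mem_erase.mpr ⟨Ne.symm hne, hw⟩
    have hsplit : ∀ f : Fin n → ℕ,
        ∑ v ∈ U, f v = f u + (f w + ∑ v ∈ (U.erase u).erase w, f v) := by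
      intro f
      rw [← Finset.add_sum_erase U f hu, ← Finset.add_sum_erase _ f hwU']
    have hrest : ∑ v ∈ (U.erase u).erase w, hdeg H2 v
        = ∑ v ∈ (U.erase u).erase w, hdeg H' v := by
      apply Finset.sum_congr rfl
      intro v hv
      simp only [Finset.mem_erase] at hv
      exact hsame v hv.2.1 hv.1
    have hrest2 : ∑ v ∈ (U.erase u).erase w, (hdeg H2 v)^2
        = ∑ v ∈ (U.erase u).erase w, (hdeg H' v)^2 := by
      apply Finset.sum_congr rfl
      intro v hv
      simp only [Finset.mem_erase] at hv
      rw [hsame v hv.2.1 hv.1]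
    -- sum equality
    have hsumeq : ∑ v ∈ U, hdeg H2 v = ∑ v ∈ U, hdeg H' v := by
      rw [hsplit (hdeg H2), hsplit (hdeg H'), hrest]
      omega
    -- measure decreases
    have hmeas : ∑ v ∈ U, (hdeg H2 v)^2 ≤ N := by
      have h1 := hsplit (fun v => (hdeg H2 v)^2)
      have h2 := hsplit (fun v => (hdeg H' v)^2)
      rw [h2] at hsum
      rw [h1, hrest2, hdw]
      set a := hdeg H' u with ha
      set b := hdeg H' w with hb
      set s := hdeg H2 u with hs
      nlinarith [hsum, hdu, hgap]
    obtain ⟨H3, h3t, h3out, h3sum, h3reg⟩ := ih H2 ht2 hmeas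
    refine ⟨H3, h3t, ?_, ?_, h3reg⟩
    · intro v hv
      rw [h3out v hv, hsame v (fun h => hv (h ▸ hu)) (fun h => hv (h ▸ hw))]
    · rw [h3sum, hsumeq]

/-- Given a simple `t`-uniform hypergraph `H` and a vertex subset `U`, there is a simple
`t`-uniform hypergraph `H'` with the same degrees outside `U`, the same degree sum over
`U`, and almost regular degrees on `U`. -/
theorem exists_almost_regular_on_subset (n t : ℕ) (H : Finset (Finset (Fin n)))
    (hH : ∀ e ∈ H, e.card = t) (U : Finset (Fin n)) :
    ∃ H' : Finset (Finset (Fin n)),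
      (∀ e ∈ H', e.card = t) ∧
      (∀ v ∉ U, hdeg H' v = hdeg H v) ∧
      (∑ v ∈ U, hdeg H' v = ∑ v ∈ U, hdeg H v) ∧
      (∃ k : ℕ, ∀ v ∈ U, hdeg H' v = k ∨ hdeg H' v = k + 1) := by
  exact aux_main n t U (∑ v ∈ U, (hdeg H v)^2) H hH le_rfl
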